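/- Fix q ∈ ℝ with q ≠ 0 and z₀ ∈ ℂ, and let H(z) := (q/(4π√2)) · (1 + z₀·conj z)/(z − z₀) for z ≠ z₀. Then the function z ↦ |H(z)|² · 4(1+|z|²)^{-2} is NOT Lebesgue-integrable on ℂ. (This is the paper's collinear-divergence claim for massless QED: the electromagnetic memory forced by charge conservation is not square-integrable on the 2-sphere, so the corresponding out-state would have infinite energy.) -/

import Mathlib

noncomputable section

open MeasureTheory Set

/-- Auxiliary: `1/|w|²` is not integrable on a small square touching the origin in `ℂ`. -/
lemma aux_not_integrableOn_inv_sq_abs {a : ℝ} (ha : 0 < a) :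
    ¬ MeasureTheory.IntegrableOn (fun w : ℂ => (‖w‖ ^ 2)⁻¹)
      {w : ℂ | w.re ∈ Ioo 0 a ∧ w.im ∈ Ioo 0 a} := by
  intro h
  have hset : Complex.measurableEquivRealProd ⁻¹' (Ioo 0 a ×ˢ Ioo 0 a)
      = {w : ℂ | w.re ∈ Ioo 0 a ∧ w.im ∈ Ioo 0 a} := by
    ext z
    simp [Complex.measurableEquivRealProd, Complex.equivRealProd]
  have hfun : ((fun p : ℝ × ℝ => (p.1 ^ 2 + p.2 ^ 2)⁻¹) ∘ ⇑Complex.measurableEquivRealProd)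
      = fun z : ℂ => (‖z‖ ^ 2)⁻¹ := by
    funext z
    simp only [Function.comp_apply, Complex.measurableEquivRealProd_apply]
    rw [Complex.sq_norm, Complex.normSq_apply]
    ring_nf
  have h2 : IntegrableOn (fun p : ℝ × ℝ => (p.1 ^ 2 + p.2 ^ 2)⁻¹) (Ioo 0 a ×ˢ Ioo 0 a) := by
    rw [← Complex.volume_preserving_equiv_real_prod.integrableOn_comp_preimage
      Complex.measurableEquivRealProd.measurableEmbedding, hset, hfun]
    exact h
  rw [IntegrableOn, Measure.volume_eq_prod, ← Measure.prod_restrict] at h2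
  have hG : Integrable (fun x => ∫ y in Ioo 0 a, (x ^ 2 + y ^ 2)⁻¹)
      (volume.restrict (Ioo 0 a)) := h2.integral_prod_left
  -- lower bound on the inner integral
  have key : ∀ x ∈ Ioo 0 a, (2 * x)⁻¹ ≤ ∫ y in Ioo 0 a, (x ^ 2 + y ^ 2)⁻¹ := by
    intro x hx
    have hx0 : 0 < x := hx.1
    have hcont : Continuous fun y : ℝ => (x ^ 2 + y ^ 2)⁻¹ := by
      refine (continuous_const.add (continuous_pow 2)).inv₀ fun y => (by positivity : x ^ 2 + y ^ 2 ≠ 0)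
    have hint : IntegrableOn (fun y : ℝ => (x ^ 2 + y ^ 2)⁻¹) (Ioo 0 a) :=
      (hcont.integrableOn_Icc (a := 0) (b := a)).mono_set Ioo_subset_Icc_self
    have step1 : (2 * x)⁻¹ ≤ ∫ y in Ioo 0 x, (x ^ 2 + y ^ 2)⁻¹ := by
      have hle : ∀ y ∈ Ioo 0 x, (2 * x ^ 2)⁻¹ ≤ (x ^ 2 + y ^ 2)⁻¹ := by
        intro y hy
        apply inv_anti₀ (by positivity)
        nlinarith [hy.1, hy.2]
      have hintx : IntegrableOn (fun y : ℝ => (x ^ 2 + y ^ 2)⁻¹) (Ioo 0 x) :=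
        hint.mono_set (Ioo_subset_Ioo le_rfl hx.2.le)
      calc (2 * x)⁻¹ = ∫ _ in Ioo 0 x, (2 * x ^ 2)⁻¹ := by
            rw [setIntegral_const, measureReal_def, Real.volume_Ioo, sub_zero,
              ENNReal.toReal_ofReal hx0.le, smul_eq_mul]
            field_simp
        _ ≤ ∫ y in Ioo 0 x, (x ^ 2 + y ^ 2)⁻¹ :=
            setIntegral_mono_on (integrableOn_const (by simp) enorm_ne_top)
              hintx measurableSet_Ioo hle
    refine step1.trans (setIntegral_mono_set hint ?_ ?_)
    · filter_upwards with y using by positivity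
    · exact HasSubset.Subset.eventuallyLE (Ioo_subset_Ioo le_rfl hx.2.le)
  -- hence x⁻¹ is integrable on (0, a), contradiction
  have hinv2 : Integrable (fun x : ℝ => (2 * x)⁻¹) (volume.restrict (Ioo 0 a)) := by
    refine hG.norm.mono' ((measurable_id.const_mul 2).inv.aestronglyMeasurable) ?_
    filter_upwards [ae_restrict_mem measurableSet_Ioo] with x hx
    have hx0 := hx.1
    rw [Real.norm_eq_abs, abs_of_nonneg (by positivity : (0:ℝ) ≤ (2 * x)⁻¹)]
    exact (key x hx).trans (le_abs_self _)
  have hinv : IntegrableOn (fun x : ℝ => x⁻¹) (Ioo 0 a) := by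
    refine (hinv2.const_mul 2).congr (Filter.Eventually.of_forall fun x => ?_)
    show 2 * (2 * x)⁻¹ = x⁻¹
    rw [mul_inv, ← mul_assoc, mul_inv_cancel₀ (two_ne_zero), one_mul]
  have : IntervalIntegrable (fun x : ℝ => x⁻¹) volume 0 a := by
    rwa [intervalIntegrable_iff_integrableOn_Ioo_of_le ha.le]
  rw [intervalIntegrable_inv_iff] at this
  rcases this with h' | h'
  · exact ha.ne' h'.symm
  · exact h' (by simp [Set.uIcc_of_le ha.le, ha.le])

/-- The paper's electromagnetic memory Green's function (4.19):
`H(z) = (q/(4π√2)) (1 + z₀ z̄)/(z − z₀)`. -/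
def memH (q : ℝ) (z₀ z : ℂ) : ℂ :=
  ((q / (4 * Real.pi * Real.sqrt 2) : ℝ) : ℂ) *
    (1 + z₀ * (starRingEnd ℂ) z) / (z - z₀)

/-- **Collinear divergence in massless QED**: the electromagnetic memory forced
by charge conservation is not square-integrable on the 2-sphere — the function
`z ↦ |H(z)|² · 4(1+|z|²)⁻²` is not Lebesgue-integrable on `ℂ` (where
`4(1+|z|²)⁻²` is the density of the round sphere measure in stereographic
coordinates) — so the corresponding out-state would have infinite energy. -/
theorem memH_not_square_integrable (q : ℝ) (hq : q ≠ 0) (z₀ : ℂ) :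
    ¬ MeasureTheory.Integrable
        (fun z : ℂ => ‖memH q z₀ z‖ ^ 2 * (4 * ((1 + ‖z‖ ^ 2) ^ 2)⁻¹)) := by
  intro hInt
  set g : ℂ → ℝ :=
    fun z => ‖memH q z₀ z‖ ^ 2 * (4 * ((1 + ‖z‖ ^ 2) ^ 2)⁻¹) with hgdef
  set C : ℝ := q / (4 * Real.pi * Real.sqrt 2) with hCdef
  have hC : C ≠ 0 := by
    have h2 : (0:ℝ) < 4 * Real.pi * Real.sqrt 2 := by positivity
    exact div_ne_zero hq h2.ne'
  have hC2 : (0:ℝ) < C ^ 2 := by positivity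
  set M : ℝ := ‖z₀‖ with hMdef
  have hM : 0 ≤ M := norm_nonneg z₀
  set a : ℝ := min 2⁻¹ (4 * (M + 1))⁻¹ with hadef
  have ha : 0 < a := lt_min (by norm_num) (by positivity)
  set S : Set ℂ := {w : ℂ | w.re ∈ Ioo 0 a ∧ w.im ∈ Ioo 0 a} with hSdef
  set c : ℝ := C ^ 2 * 4⁻¹ * (4 * ((1 + (M + 1) ^ 2) ^ 2)⁻¹) with hcdef
  have hc : 0 < c := by positivity
  -- translated integrand is integrable
  have htr : Integrable (fun w : ℂ => g (w + z₀)) :=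
    ((measurePreserving_add_right volume z₀).integrable_comp_emb
      (Homeomorph.addRight z₀).measurableEmbedding).2 hInt
  have hOn : IntegrableOn (fun w : ℂ => g (w + z₀)) S := htr.integrableOn
  -- key pointwise lower bound on S
  have bound : ∀ w ∈ S, c * (‖w‖ ^ 2)⁻¹ ≤ g (w + z₀) := by
    intro w hw
    obtain ⟨hre, him⟩ := hw
    have hw0 : w ≠ 0 := fun h => by simp [h] at hre
    have habs0 : 0 < ‖w‖ := norm_pos_iff.mpr hw0
    have habs_le : ‖w‖ ≤ 2 * a := by
      calc ‖w‖ ≤ |w.re| + |w.im| := Complex.norm_le_abs_re_add_abs_im w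
        _ ≤ a + a := add_le_add
            (by rw [abs_of_pos hre.1]; exact hre.2.le)
            (by rw [abs_of_pos him.1]; exact him.2.le)
        _ = 2 * a := by ring
    have habs_le_one : ‖w‖ ≤ 1 := by
      have : 2 * a ≤ 2 * 2⁻¹ := by
        have := min_le_left (2⁻¹ : ℝ) ((4 * (M + 1))⁻¹)
        linarith [this]
      linarith [habs_le, this]
    have habs_le' : ‖w‖ ≤ (2 * (M + 1))⁻¹ := by
      have h1 : a ≤ (4 * (M + 1))⁻¹ := min_le_right _ _
      have : 2 * a ≤ 2 * (4 * (M + 1))⁻¹ := by linarith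
      have h2 : 2 * (4 * (M + 1))⁻¹ = (2 * (M + 1))⁻¹ := by
        field_simp
        ring
      linarith [habs_le, this, h2.le]
    -- numerator lower bound
    set N : ℂ := 1 + z₀ * (starRingEnd ℂ) (w + z₀) with hNdef
    have hN : (2:ℝ)⁻¹ ≤ ‖N‖ := by
      have hsplit : N = (1 + z₀ * (starRingEnd ℂ) z₀) + z₀ * (starRingEnd ℂ) w := by
        rw [hNdef, map_add]; ring
      have h1 : ‖1 + z₀ * (starRingEnd ℂ) z₀‖ = 1 + M ^ 2 := by
        rw [Complex.mul_conj]
        rw [show (1 : ℂ) + (Complex.normSq z₀ : ℝ) = ((1 + Complex.normSq z₀ : ℝ) : ℂ) by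
          push_cast; ring]
        rw [Complex.norm_real, Real.norm_eq_abs, abs_of_pos (by have := Complex.normSq_nonneg z₀; linarith), ← Complex.sq_norm]
      have h2 : ‖z₀ * (starRingEnd ℂ) w‖ ≤ 2⁻¹ := by
        rw [norm_mul, Complex.norm_conj]
        calc M * ‖w‖ ≤ (M + 1) * (2 * (M + 1))⁻¹ := by
              apply mul_le_mul (by linarith) habs_le' habs0.le (by linarith)
          _ ≤ 2⁻¹ := by
              rw [mul_inv]
              rw [show (M + 1) * (2⁻¹ * (M + 1)⁻¹) = 2⁻¹ * ((M + 1) * (M + 1)⁻¹) by ring,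
                mul_inv_cancel₀ (by positivity : M + 1 ≠ 0)]
              norm_num
      calc (2:ℝ)⁻¹ ≤ (1 + M ^ 2) - 2⁻¹ := by nlinarith
        _ ≤ ‖1 + z₀ * (starRingEnd ℂ) z₀‖ - ‖z₀ * (starRingEnd ℂ) w‖ := by
            rw [h1]; linarith [h2]
        _ ≤ ‖N‖ := by
            rw [hsplit]
            have := norm_sub_norm_le (1 + z₀ * (starRingEnd ℂ) z₀)
              (-(z₀ * (starRingEnd ℂ) w))
            simpa [sub_neg_eq_add] using this
    -- the memH value
    have hval : ‖memH q z₀ (w + z₀)‖ = |C| * ‖N‖ / ‖w‖ := by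
      rw [memH, add_sub_cancel_right, norm_div, norm_mul, Complex.norm_real, Real.norm_eq_abs, ← hCdef, ← hNdef]
    -- density lower bound
    have hdens : 4 * ((1 + (M + 1) ^ 2) ^ 2)⁻¹ ≤ 4 * ((1 + ‖w + z₀‖ ^ 2) ^ 2)⁻¹ := by
      have h3 : ‖w + z₀‖ ≤ M + 1 := by
        calc ‖w + z₀‖ ≤ ‖w‖ + M := norm_add_le w z₀
          _ ≤ M + 1 := by linarith [habs_le_one]
      have hnn : 0 ≤ ‖w + z₀‖ := norm_nonneg (w + z₀)
      have hb2 : ‖w + z₀‖ ^ 2 ≤ (M + 1) ^ 2 := by nlinarith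
      have h4 : (1 + ‖w + z₀‖ ^ 2) ^ 2 ≤ (1 + (M + 1) ^ 2) ^ 2 := by nlinarith
      have h5 : ((1 + (M + 1) ^ 2) ^ 2)⁻¹ ≤ ((1 + ‖w + z₀‖ ^ 2) ^ 2)⁻¹ :=
        inv_anti₀ (by positivity) h4
      linarith
    -- assemble
    have hA : |C| * 2⁻¹ * (‖w‖)⁻¹ ≤ ‖memH q z₀ (w + z₀)‖ := by
      rw [hval, div_eq_mul_inv]
      have h5 : |C| * 2⁻¹ ≤ |C| * ‖N‖ :=
        mul_le_mul_of_nonneg_left hN (abs_nonneg C)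
      exact mul_le_mul_of_nonneg_right h5 (inv_nonneg.2 habs0.le)
    have hcc : c * (‖w‖ ^ 2)⁻¹
        = (|C| * 2⁻¹ * (‖w‖)⁻¹) ^ 2 * (4 * ((1 + (M + 1) ^ 2) ^ 2)⁻¹) := by
      rw [hcdef]
      rw [mul_pow, mul_pow, sq_abs, ← inv_pow]
      ring
    rw [hgdef, hcc]
    exact mul_le_mul (pow_le_pow_left₀ (by positivity) hA 2) hdens (by positivity) (by positivity)
  -- hence the minorant is integrable on S, contradiction with the aux lemma
  have hgnn : ∀ z : ℂ, 0 ≤ g z := fun z => by rw [hgdef]; positivity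
  have hmin : IntegrableOn (fun w : ℂ => c * (‖w‖ ^ 2)⁻¹) S := by
    refine hOn.norm.mono' ?_ ?_
    · exact ((continuous_norm.measurable.pow_const 2).inv.const_mul c).aestronglyMeasurable
    · filter_upwards [ae_restrict_mem (by
        exact (measurableSet_Ioo.preimage Complex.measurable_re).inter
          (measurableSet_Ioo.preimage Complex.measurable_im))] with w hw
      rw [Real.norm_eq_abs, abs_of_nonneg (by positivity)]
      exact (bound w hw).trans (le_abs_self _)
  have hmin' : IntegrableOn (fun w : ℂ => (‖w‖ ^ 2)⁻¹) S := by
    refine (hmin.const_mul c⁻¹).congr (Filter.Eventually.of_forall fun w => ?_)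
    show c⁻¹ * (c * (‖w‖ ^ 2)⁻¹) = (‖w‖ ^ 2)⁻¹
    rw [inv_mul_cancel_left₀ hc.ne']
  exact aux_not_integrableOn_inv_sq_abs ha hmin'

end
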